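/- Let K be algebraically closed of characteristic 0. Suppose ρ is a 2-dimensional strictly indecomposable representation of B₃ over K, with A = ρ(σ₁), B = ρ(σ₂). Then either (i) A is diagonalizable with two distinct eigenvalues λ₁, λ₂ satisfying λ₁² − λ₁λ₂ + λ₂² = 0 and ρ is equivalent to the representation A = diag(λ₁,λ₂), B = [[λ₁,1],[0,λ₂]], or (ii) A is a single Jordan block and ρ is equivalent to A = B = [[λ,1],[0,λ]] for some λ ∈ K^×. -/

import Mathlib

open Matrix Submodule

section Helpers

variable {K : Type*} [Field K]

private lemma mulVec_inj' {M : Matrix (Fin 2) (Fin 2) K} (hM : IsUnit M.det)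
    {x : Fin 2 → K} (h : M.mulVec x = 0) : x = 0 := by
  have : M⁻¹.mulVec (M.mulVec x) = M⁻¹.mulVec 0 := by rw [h]
  rwa [Matrix.mulVec_mulVec, Matrix.nonsing_inv_mul _ hM, Matrix.one_mulVec,
    Matrix.mulVec_zero] at this

private lemma transfer' (A B M : Matrix (Fin 2) (Fin 2) K) (hM : IsUnit M.det)
    (h : ∃ W₁ W₂ : Submodule K (Fin 2 → K), W₁ ≠ ⊥ ∧ W₂ ≠ ⊥ ∧ IsCompl W₁ W₂ ∧
      W₁.map (M⁻¹*A*M).mulVecLin ≤ W₁ ∧ W₁.map (M⁻¹*B*M).mulVecLin ≤ W₁ ∧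
      W₂.map (M⁻¹*A*M).mulVecLin ≤ W₂ ∧ W₂.map (M⁻¹*B*M).mulVecLin ≤ W₂) :
    ∃ W₁ W₂ : Submodule K (Fin 2 → K), W₁ ≠ ⊥ ∧ W₂ ≠ ⊥ ∧ IsCompl W₁ W₂ ∧
      W₁.map A.mulVecLin ≤ W₁ ∧ W₁.map B.mulVecLin ≤ W₁ ∧
      W₂.map A.mulVecLin ≤ W₂ ∧ W₂.map B.mulVecLin ≤ W₂ := by
  obtain ⟨W₁, W₂, h1, h2, hc, hA1, hB1, hA2, hB2⟩ := h
  set e : (Fin 2 → K) ≃ₗ[K] (Fin 2 → K) :=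
    LinearEquiv.ofLinear M.mulVecLin M⁻¹.mulVecLin
      (by rw [← Matrix.mulVecLin_mul, Matrix.mul_nonsing_inv _ hM, Matrix.mulVecLin_one])
      (by rw [← Matrix.mulVecLin_mul, Matrix.nonsing_inv_mul _ hM, Matrix.mulVecLin_one])
    with he
  have hmape : ∀ W : Submodule K (Fin 2 → K), W.map (e : (Fin 2 → K) →ₗ[K] (Fin 2 → K)) = W.map M.mulVecLin := by
    intro W; ext z
    simp [Submodule.mem_map, he, LinearEquiv.ofLinear_apply]
  have hbot : ∀ W : Submodule K (Fin 2 → K), W ≠ ⊥ → W.map M.mulVecLin ≠ ⊥ := by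
    intro W hW
    obtain ⟨x, hxW, hx⟩ := (Submodule.ne_bot_iff W).mp hW
    refine (Submodule.ne_bot_iff _).mpr ⟨M.mulVec x, ⟨x, hxW, rfl⟩, fun h0 => hx ?_⟩
    exact mulVec_inj' hM h0
  have hinv : ∀ (X : Matrix (Fin 2) (Fin 2) K) (W : Submodule K (Fin 2 → K)),
      W.map (M⁻¹*X*M).mulVecLin ≤ W →
      (W.map M.mulVecLin).map X.mulVecLin ≤ W.map M.mulVecLin := by
    intro X W hW
    have key : X * M = M * (M⁻¹ * X * M) := by
      rw [Matrix.mul_assoc M⁻¹ X M, Matrix.mul_nonsing_inv_cancel_left _ _ hM]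
    calc (W.map M.mulVecLin).map X.mulVecLin
        = W.map ((X * M).mulVecLin) := by
          rw [Matrix.mulVecLin_mul, Submodule.map_comp]
      _ = (W.map (M⁻¹*X*M).mulVecLin).map M.mulVecLin := by
          rw [key, Matrix.mulVecLin_mul, Submodule.map_comp]
      _ ≤ W.map M.mulVecLin := Submodule.map_mono hW
  refine ⟨W₁.map M.mulVecLin, W₂.map M.mulVecLin, hbot _ h1, hbot _ h2, ?_,
    hinv A W₁ hA1, hinv B W₁ hB1, hinv A W₂ hA2, hinv B W₂ hB2⟩
  have := (Submodule.orderIsoMapComap e).isCompl hc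
  rwa [Submodule.orderIsoMapComap_apply, Submodule.orderIsoMapComap_apply,
    hmape, hmape] at this

private lemma decomp2' (A B : Matrix (Fin 2) (Fin 2) K) (u : Fin 2 → K) (hu : u 1 ≠ 0)
    (c1 c2 d1 d2 : K) (hA1 : A.mulVec ![1,0] = c1 • ![1,0]) (hA2 : A.mulVec u = c2 • u)
    (hB1 : B.mulVec ![1,0] = d1 • ![1,0]) (hB2 : B.mulVec u = d2 • u) :
    ∃ W₁ W₂ : Submodule K (Fin 2 → K), W₁ ≠ ⊥ ∧ W₂ ≠ ⊥ ∧ IsCompl W₁ W₂ ∧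
      W₁.map A.mulVecLin ≤ W₁ ∧ W₁.map B.mulVecLin ≤ W₁ ∧
      W₂.map A.mulVecLin ≤ W₂ ∧ W₂.map B.mulVecLin ≤ W₂ := by
  have he : (![1,0] : Fin 2 → K) ≠ 0 := by
    intro h; have := congrFun h 0; simp at this
  have hu0 : u ≠ 0 := fun h => hu (by rw [h]; rfl)
  have hinv : ∀ (X : Matrix (Fin 2) (Fin 2) K) (w : Fin 2 → K) (c : K),
      X.mulVec w = c • w → (span K {w}).map X.mulVecLin ≤ span K {w} := by
    intro X w c hX
    rw [Submodule.map_span, Set.image_singleton, Matrix.mulVecLin_apply, hX]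
    exact Submodule.span_le.mpr (Set.singleton_subset_iff.mpr
      (Submodule.smul_mem _ _ (Submodule.mem_span_singleton_self w)))
  refine ⟨span K {![1,0]}, span K {u}, by simpa using he, by simpa using hu0, ?_,
    hinv A _ _ hA1, hinv B _ _ hB1, hinv A _ _ hA2, hinv B _ _ hB2⟩
  refine IsCompl.of_eq ?_ ?_
  · rw [eq_bot_iff]
    intro z hz
    obtain ⟨hz1, hz2⟩ := Submodule.mem_inf.mp hz
    obtain ⟨c, hc⟩ := Submodule.mem_span_singleton.mp hz1
    obtain ⟨d, hd⟩ := Submodule.mem_span_singleton.mp hz2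
    have h1 : z 1 = 0 := by rw [← hc]; simp
    have h2 : z 1 = d * u 1 := by rw [← hd]; simp
    have hd0 : d = 0 := by
      rcases mul_eq_zero.mp (h2 ▸ h1 : d * u 1 = 0) with h | h
      · exact h
      · exact absurd h hu
    have hz0 : z = 0 := by rw [← hd, hd0, zero_smul]
    simp [hz0]
  · rw [eq_top_iff]
    intro z _
    have hz : z = (z 0 - z 1 / u 1 * u 0) • ![1,0] + (z 1 / u 1) • u := by
      funext i
      fin_cases i <;> simp <;> field_simp
    rw [hz]
    exact Submodule.add_mem _
      (Submodule.mem_sup_left (Submodule.smul_mem _ _ (Submodule.mem_span_singleton_self _)))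
      (Submodule.mem_sup_right (Submodule.smul_mem _ _ (Submodule.mem_span_singleton_self _)))

private lemma mulVec_ul (p q r s v0 v1 c : K) (h0 : p*v0 + q*v1 = c*v0)
    (h1 : r*v0 + s*v1 = c*v1) : !![p,q;r,s].mulVec ![v0,v1] = c • ![v0,v1] := by
  funext i
  fin_cases i <;> simp [Matrix.mulVec, dotProduct, Fin.sum_univ_two] <;>
    [exact h0; exact h1]

private lemma conj_lower_left' (M X : Matrix (Fin 2) (Fin 2) K) (hM : IsUnit M.det)
    (v : Fin 2 → K) (hv : ∀ i, M i 0 = v i) (c : K) (hX : X.mulVec v = c • v) :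
    (M⁻¹ * X * M) 1 0 = 0 := by
  have hMe : M.mulVec (Pi.single 0 1 : Fin 2 → K) = v := by
    funext i; rw [Matrix.mulVec_single]; simp [hv i]
  have h1 : (M⁻¹ * X * M).mulVec (Pi.single 0 1 : Fin 2 → K)
      = c • (Pi.single 0 1 : Fin 2 → K) := by
    rw [← Matrix.mulVec_mulVec, ← Matrix.mulVec_mulVec, hMe, hX,
      Matrix.mulVec_smul, ← hMe, Matrix.mulVec_mulVec,
      Matrix.nonsing_inv_mul _ hM, Matrix.one_mulVec]
  have := congrFun h1 1
  simpa [Matrix.mulVec_single] using this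

private lemma conj_final' (A M N S T : Matrix (Fin 2) (Fin 2) K)
    (hM : IsUnit M.det) (hN : IsUnit N.det)
    (hA' : M⁻¹ * A * M = S) (hSN : S * N = N * T) :
    (M * N)⁻¹ * A * (M * N) = T := by
  have hMN : IsUnit (M * N).det := by rw [Matrix.det_mul]; exact hM.mul hN
  have hAM : A * M = M * S := by
    rw [← hA', Matrix.mul_assoc M⁻¹ A M, Matrix.mul_nonsing_inv_cancel_left _ _ hM]
  have key : A * (M * N) = (M * N) * T := by
    rw [← Matrix.mul_assoc, hAM, Matrix.mul_assoc, hSN, ← Matrix.mul_assoc]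
  rw [Matrix.mul_assoc, key, ← Matrix.mul_assoc, Matrix.nonsing_inv_mul _ hMN, Matrix.one_mul]

private lemma main_lemma (A B M : Matrix (Fin 2) (Fin 2) K)
    (hA : IsUnit A) (hB : IsUnit B)
    (hbraid : A * B * A = B * A * B)
    (hindec : ¬ ∃ W₁ W₂ : Submodule K (Fin 2 → K), W₁ ≠ ⊥ ∧ W₂ ≠ ⊥ ∧ IsCompl W₁ W₂ ∧
      W₁.map A.mulVecLin ≤ W₁ ∧ W₁.map B.mulVecLin ≤ W₁ ∧
      W₂.map A.mulVecLin ≤ W₂ ∧ W₂.map B.mulVecLin ≤ W₂)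
    (hM : IsUnit M.det)
    (hA0 : (M⁻¹ * A * M) 1 0 = 0) (hB0 : (M⁻¹ * B * M) 1 0 = 0) :
    (∃ lam1 lam2 : K, lam1 ≠ 0 ∧ lam2 ≠ 0 ∧ lam1 ≠ lam2 ∧
        lam1 ^ 2 - lam1 * lam2 + lam2 ^ 2 = 0 ∧
        ∃ M : Matrix (Fin 2) (Fin 2) K, IsUnit M ∧
          M⁻¹ * A * M = !![lam1, 0; 0, lam2] ∧ M⁻¹ * B * M = !![lam1, 1; 0, lam2]) ∨
    (∃ lam : K, lam ≠ 0 ∧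
        ∃ M : Matrix (Fin 2) (Fin 2) K, IsUnit M ∧
          M⁻¹ * A * M = !![lam, 1; 0, lam] ∧ M⁻¹ * B * M = !![lam, 1; 0, lam]) := by
  obtain ⟨a, x, d, hA'⟩ : ∃ a x d, M⁻¹ * A * M = !![a, x; 0, d] :=
    ⟨(M⁻¹ * A * M) 0 0, (M⁻¹ * A * M) 0 1, (M⁻¹ * A * M) 1 1,
      by ext i j; fin_cases i <;> fin_cases j <;> simp [hA0]⟩
  obtain ⟨b, y, e, hB'⟩ : ∃ b y e, M⁻¹ * B * M = !![b, y; 0, e] :=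
    ⟨(M⁻¹ * B * M) 0 0, (M⁻¹ * B * M) 0 1, (M⁻¹ * B * M) 1 1,
      by ext i j; fin_cases i <;> fin_cases j <;> simp [hB0]⟩
  have hdet : ∀ (X : Matrix (Fin 2) (Fin 2) K) (p q r : K), IsUnit X →
      M⁻¹ * X * M = !![p, q; 0, r] → p ≠ 0 ∧ r ≠ 0 := by
    intro X p q r hX hX'
    have h1 : (M⁻¹ * X * M).det = X.det := by
      rw [Matrix.det_mul, Matrix.det_mul, Matrix.det_nonsing_inv]
      rw [Ring.inverse_eq_inv']
      field_simp
      exact mul_div_cancel_left₀ _ hM.ne_zero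
    rw [hX', Matrix.det_fin_two_of] at h1
    have h2 : p * r ≠ 0 := by
      rw [show p * r = p * r - q * 0 by ring, h1]
      exact ((Matrix.isUnit_iff_isUnit_det X).mp hX).ne_zero
    exact mul_ne_zero_iff.mp h2
  obtain ⟨ha, hd⟩ := hdet A a x d hA hA'
  obtain ⟨hb, he⟩ := hdet B b y e hB hB'
  have hb1 : !![a,x;0,d] * !![b,y;0,e] * !![a,x;0,d]
      = !![b,y;0,e] * !![a,x;0,d] * !![b,y;0,e] := by
    rw [← hA', ← hB']
    have h2 := congrArg (fun Z => M⁻¹ * Z * M) hbraid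
    simp only [Matrix.mul_assoc] at h2 ⊢
    simp only [Matrix.mul_nonsing_inv_cancel_left _ _ hM]
    exact h2
  have e00 := congrFun (congrFun hb1 0) 0
  have e11 := congrFun (congrFun hb1 1) 1
  simp [Matrix.mul_apply, Fin.sum_univ_two] at e00 e11
  have hba : b = a := by
    have h : a * b * (a - b) = 0 := by linear_combination e00
    rcases mul_eq_zero.mp h with h | h
    · rcases mul_eq_zero.mp h with h | h
      · exact absurd h ha
      · exact absurd h hb
    · exact (sub_eq_zero.mp h).symm
  have hed : e = d := by
    have h : d * e * (d - e) = 0 := by linear_combination e11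
    rcases mul_eq_zero.mp h with h | h
    · rcases mul_eq_zero.mp h with h | h
      · exact absurd h hd
      · exact absurd h he
    · exact (sub_eq_zero.mp h).symm
  subst b
  subst e
  have e01 := congrFun (congrFun hb1 0) 1
  simp [Matrix.mul_apply, Fin.sum_univ_two] at e01
  have key : (x - y) * (a^2 - a*d + d^2) = 0 := by linear_combination e01
  by_cases hxy : x = y
  · subst hxy
    by_cases had : a = d
    · subst had
      by_cases hx0 : x = 0
      · subst hx0
        exfalso
        apply hindec
        apply transfer' A B M hM
        refine decomp2' _ _ ![0, 1] (by norm_num) a a a a ?_ ?_ ?_ ?_ <;>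
          [rw [hA']; rw [hA']; rw [hB']; rw [hB']] <;>
          exact mulVec_ul _ _ _ _ _ _ _ (by ring) (by ring)
      · right
        refine ⟨a, ha, M * !![1, 0; 0, x⁻¹], ?_, ?_, ?_⟩
        · rw [Matrix.isUnit_iff_isUnit_det, Matrix.det_mul]
          refine hM.mul ?_
          rw [Matrix.det_fin_two_of]
          simpa using isUnit_iff_ne_zero.mpr (inv_ne_zero hx0)
        · refine conj_final' A M _ _ _ hM ?_ hA' ?_
          · rw [Matrix.det_fin_two_of]; simpa using isUnit_iff_ne_zero.mpr (inv_ne_zero hx0)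
          · ext i j
            fin_cases i <;> fin_cases j <;>
              simp [Matrix.mul_apply, Fin.sum_univ_two] <;> field_simp
        · refine conj_final' B M _ _ _ hM ?_ hB' ?_
          · rw [Matrix.det_fin_two_of]; simpa using isUnit_iff_ne_zero.mpr (inv_ne_zero hx0)
          · ext i j
            fin_cases i <;> fin_cases j <;>
              simp [Matrix.mul_apply, Fin.sum_univ_two] <;> field_simp
    · exfalso
      apply hindec
      apply transfer' A B M hM
      refine decomp2' _ _ ![x, d - a] (sub_ne_zero.mpr (Ne.symm had)) a d a d ?_ ?_ ?_ ?_ <;>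
        [rw [hA']; rw [hA']; rw [hB']; rw [hB']] <;>
        exact mulVec_ul _ _ _ _ _ _ _ (by ring) (by ring)
  · left
    have h2 : a^2 - a*d + d^2 = 0 := by
      rcases mul_eq_zero.mp key with h | h
      · exact absurd (sub_eq_zero.mp h) hxy
      · exact h
    have had : a ≠ d := by
      intro h
      apply hd
      have : d^2 = 0 := by rw [h] at h2; linear_combination h2
      exact pow_eq_zero_iff (by norm_num) |>.mp this
    have hyx : y - x ≠ 0 := sub_ne_zero.mpr (Ne.symm hxy)
    have hda : d - a ≠ 0 := sub_ne_zero.mpr (Ne.symm had)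
    have hc : ((y - x)⁻¹ : K) ≠ 0 := inv_ne_zero hyx
    have hNdet : IsUnit (!![(1:K), x * (y-x)⁻¹ / (d-a); 0, (y-x)⁻¹]).det := by
      rw [Matrix.det_fin_two_of]; simpa using isUnit_iff_ne_zero.mpr hc
    refine ⟨a, d, ha, hd, had, h2, M * !![1, x * (y-x)⁻¹ / (d-a); 0, (y-x)⁻¹], ?_, ?_, ?_⟩
    · rw [Matrix.isUnit_iff_isUnit_det, Matrix.det_mul]
      exact hM.mul hNdet
    · refine conj_final' A M _ _ _ hM hNdet hA' ?_
      ext i j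
      fin_cases i <;> fin_cases j <;>
        simp [Matrix.mul_apply, Fin.sum_univ_two] <;> field_simp <;> ring
    · refine conj_final' B M _ _ _ hM hNdet hB' ?_
      ext i j
      fin_cases i <;> fin_cases j <;>
        simp [Matrix.mul_apply, Fin.sum_univ_two] <;> field_simp <;> ring

end Helpers

theorem dim2_strictly_indecomposable_classification
    (K : Type*) [Field K] [IsAlgClosed K] [CharZero K]
    (A B : Matrix (Fin 2) (Fin 2) K) (hA : IsUnit A) (hB : IsUnit B)
    (hbraid : A * B * A = B * A * B)
    (hred : ∃ W : Submodule K (Fin 2 → K), W ≠ ⊥ ∧ W ≠ ⊤ ∧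
      W.map A.mulVecLin ≤ W ∧ W.map B.mulVecLin ≤ W)
    (hindec : ¬ ∃ W₁ W₂ : Submodule K (Fin 2 → K), W₁ ≠ ⊥ ∧ W₂ ≠ ⊥ ∧ IsCompl W₁ W₂ ∧
      W₁.map A.mulVecLin ≤ W₁ ∧ W₁.map B.mulVecLin ≤ W₁ ∧
      W₂.map A.mulVecLin ≤ W₂ ∧ W₂.map B.mulVecLin ≤ W₂) :
    (∃ lam1 lam2 : K, lam1 ≠ 0 ∧ lam2 ≠ 0 ∧ lam1 ≠ lam2 ∧
        lam1 ^ 2 - lam1 * lam2 + lam2 ^ 2 = 0 ∧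
        ∃ M : Matrix (Fin 2) (Fin 2) K, IsUnit M ∧
          M⁻¹ * A * M = !![lam1, 0; 0, lam2] ∧ M⁻¹ * B * M = !![lam1, 1; 0, lam2]) ∨
    (∃ lam : K, lam ≠ 0 ∧
        ∃ M : Matrix (Fin 2) (Fin 2) K, IsUnit M ∧
          M⁻¹ * A * M = !![lam, 1; 0, lam] ∧ M⁻¹ * B * M = !![lam, 1; 0, lam]) := by
  obtain ⟨W, hW1, hW2, hWA, hWB⟩ := hred
  obtain ⟨v, hvW, hv⟩ := (Submodule.ne_bot_iff W).mp hW1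
  have hWspan : W = span K {v} := by
    have hle : span K {v} ≤ W := by rwa [Submodule.span_singleton_le_iff_mem]
    refine (Submodule.eq_of_le_of_finrank_le hle ?_).symm
    rw [finrank_span_singleton hv]
    have h2 : Module.finrank K W < 2 := by
      have := Submodule.finrank_lt hW2
      simpa [Module.finrank_pi] using this
    omega
  have heig : ∀ X : Matrix (Fin 2) (Fin 2) K, W.map X.mulVecLin ≤ W →
      ∃ c : K, X.mulVec v = c • v := by
    intro X hX
    have h1 : X.mulVec v ∈ W := by
      apply hX
      exact ⟨v, hvW, by simp [Matrix.mulVecLin_apply]⟩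
    rw [hWspan, Submodule.mem_span_singleton] at h1
    obtain ⟨c, hc⟩ := h1
    exact ⟨c, hc.symm⟩
  obtain ⟨cA, hcA⟩ := heig A hWA
  obtain ⟨cB, hcB⟩ := heig B hWB
  by_cases hv0 : v 0 = 0
  · have hv1 : v 1 ≠ 0 := by
      intro h; apply hv; funext i; fin_cases i <;> simp [hv0, h]
    have hMdet : IsUnit (!![(0:K), 1; v 1, 0]).det := by
      rw [Matrix.det_fin_two_of]
      simpa using isUnit_iff_ne_zero.mpr (neg_ne_zero.mpr hv1)
    have hcol : ∀ i, (!![(0:K), 1; v 1, 0]) i 0 = v i := by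
      intro i; fin_cases i <;> simp [hv0]
    exact main_lemma A B _ hA hB hbraid hindec hMdet
      (conj_lower_left' _ A hMdet v hcol cA hcA)
      (conj_lower_left' _ B hMdet v hcol cB hcB)
  · have hMdet : IsUnit (!![v 0, 0; v 1, 1]).det := by
      rw [Matrix.det_fin_two_of]
      simpa using isUnit_iff_ne_zero.mpr hv0
    have hcol : ∀ i, (!![v 0, 0; v 1, 1]) i 0 = v i := by
      intro i; fin_cases i <;> simp
    exact main_lemma A B _ hA hB hbraid hindec hMdet
      (conj_lower_left' _ A hMdet v hcol cA hcA)
      (conj_lower_left' _ B hMdet v hcol cB hcB)
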